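/- There is no right triangle with positive rational sides whose area is the square of a rational number. In particular, 1 is not a congruent number. -/

import Mathlib

private lemma co_sub {m n : ℤ} (h : IsCoprime m n) : IsCoprime m (m - n) := by
  obtain ⟨u, v, huv⟩ := h
  exact ⟨u + v, -v, by linear_combination huv⟩
private lemma co_add {m n : ℤ} (h : IsCoprime m n) : IsCoprime m (m + n) := by
  obtain ⟨u, v, huv⟩ := h
  exact ⟨u - v, v, by linear_combination huv⟩
private lemma co_sub' {m n : ℤ} (h : IsCoprime m n) : IsCoprime n (m - n) := by
  obtain ⟨u, v, huv⟩ := h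
  exact ⟨u + v, u, by linear_combination huv⟩
private lemma co_add' {m n : ℤ} (h : IsCoprime m n) : IsCoprime n (m + n) := by
  obtain ⟨u, v, huv⟩ := h
  exact ⟨v - u, u, by linear_combination huv⟩
private lemma co_sub_add {m n : ℤ} (h : IsCoprime m n) (hodd : (m + n) % 2 = 1) :
    IsCoprime (m - n) (m + n) := by
  obtain ⟨u, v, huv⟩ := h
  obtain ⟨k, hk⟩ : ∃ k, m + n = 2 * k + 1 := ⟨(m + n) / 2, by omega⟩
  exact ⟨-k * (u - v), 1 - k * (u + v), by linear_combination (-2*k) * huv + hk⟩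

private lemma pos_sq {x y r : ℤ} (hx : 0 < x) (hco : IsCoprime x y) (h : x * y = r ^ 2) :
    ∃ u : ℤ, 0 < u ∧ x = u ^ 2 := by
  obtain ⟨u, hu | hu⟩ := Int.sq_of_isCoprime hco h
  · refine ⟨|u|, ?_, by rw [sq_abs]; exact hu⟩
    rcases eq_or_ne u 0 with rfl | h0
    · simp at hu; omega
    · exact abs_pos.mpr h0
  · exfalso; nlinarith [sq_nonneg u]

private lemma odd_of_sq_odd {s : ℤ} (h : Odd (s ^ 2)) : s % 2 = 1 := by
  rcases Int.even_or_odd s with he | ho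
  · exfalso
    obtain ⟨k, hk⟩ := he
    exact (Int.not_odd_iff_even.mpr ⟨2 * k ^ 2, by rw [hk]; ring⟩) h
  · exact Int.odd_iff.mp ho

private lemma natAbs_lt {x y : ℤ} (hx : 0 < x) (hxy : x < y) : x.natAbs < y.natAbs := by
  omega

private lemma descent_step (m n r : ℤ) (hm : 0 < m) (hn : 0 < n) (hnm : n < m)
    (hco : IsCoprime m n) (hodd : (m + n) % 2 = 1)
    (hr : m * n * ((m - n) * (m + n)) = r ^ 2) :
    ∃ A B C R : ℤ, 0 < A ∧ 0 < B ∧ A ^ 2 + B ^ 2 = C ^ 2 ∧ A * B = 2 * R ^ 2 ∧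
      2 * (A * B) = n := by
  have c1 : IsCoprime m (m - n) := co_sub hco
  have c2 : IsCoprime m (m + n) := co_add hco
  have c3 : IsCoprime n (m - n) := co_sub' hco
  have c4 : IsCoprime n (m + n) := co_add' hco
  have c5 : IsCoprime (m - n) (m + n) := co_sub_add hco hodd
  have e1 : m * (n * ((m - n) * (m + n))) = r ^ 2 := by linear_combination hr
  obtain ⟨u, hu0, hu⟩ := pos_sq hm (hco.mul_right (c1.mul_right c2)) e1
  have e2 : n * (m * ((m - n) * (m + n))) = r ^ 2 := by linear_combination hr
  obtain ⟨v, hv0, hv⟩ := pos_sq hn (hco.symm.mul_right (c3.mul_right c4)) e2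
  have e3 : (m - n) * (m * (n * (m + n))) = r ^ 2 := by linear_combination hr
  obtain ⟨s, hs0, hs⟩ := pos_sq (by omega : (0:ℤ) < m - n)
    (c1.symm.mul_right (c3.symm.mul_right c5)) e3
  have e4 : (m + n) * (m * (n * (m - n))) = r ^ 2 := by linear_combination hr
  obtain ⟨t, ht0, ht⟩ := pos_sq (by omega : (0:ℤ) < m + n)
    (c2.symm.mul_right (c4.symm.mul_right c5.symm)) e4
  have hts : s < t := by nlinarith
  have hsodd : s % 2 = 1 := odd_of_sq_odd (by rw [← hs]; exact Int.odd_iff.mpr (by omega))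
  have htodd : t % 2 = 1 := odd_of_sq_odd (by rw [← ht]; exact Int.odd_iff.mpr (by omega))
  obtain ⟨A, hA⟩ : ∃ A, t + s = 2 * A := ⟨(t + s) / 2, by omega⟩
  obtain ⟨B, hB⟩ : ∃ B, t - s = 2 * B := ⟨(t - s) / 2, by omega⟩
  have htA : t = A + B := by omega
  have hsA : s = A - B := by omega
  have hApos : 0 < A := by omega
  have hBpos : 0 < B := by omega
  have hpy : A ^ 2 + B ^ 2 = u ^ 2 := by
    have h2m : t ^ 2 + s ^ 2 = 2 * u ^ 2 := by rw [← hs, ← ht, ← hu]; ring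
    rw [htA, hsA] at h2m; ring_nf at h2m ⊢; linarith
  have hv2 : v ^ 2 = 2 * (A * B) := by
    have h2n : t ^ 2 - s ^ 2 = 2 * v ^ 2 := by rw [← hs, ← ht, ← hv]; ring
    rw [htA, hsA] at h2n; ring_nf at h2n ⊢; linarith
  have hveven : Even v := by
    have h2 : Even (v ^ 2) := ⟨A * B, by linarith⟩
    rcases Int.even_or_odd v with he | ho
    · exact he
    · exact absurd (ho.pow : Odd (v ^ 2)) (Int.not_odd_iff_even.mpr h2)
  obtain ⟨w, hw⟩ := hveven
  have hv4 : v ^ 2 = 4 * w ^ 2 := by rw [hw]; ring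
  exact ⟨A, B, u, w, hApos, hBpos, hpy, by linarith, by linarith [hv, hv2]⟩

private lemma coprime_step (m n r : ℤ) (hgcd : Int.gcd m n = 1)
    (hpar : m % 2 = 0 ∧ n % 2 = 1 ∨ m % 2 = 1 ∧ n % 2 = 0)
    (ha : 0 < m ^ 2 - n ^ 2) (hb : 0 < 2 * m * n)
    (har : (m ^ 2 - n ^ 2) * (2 * m * n) = 2 * r ^ 2) :
    ∃ A B C R : ℤ, 0 < A ∧ 0 < B ∧ A ^ 2 + B ^ 2 = C ^ 2 ∧ A * B = 2 * R ^ 2 ∧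
      (A * B).natAbs < ((m ^ 2 - n ^ 2) * (2 * m * n)).natAbs := by
  have hco : IsCoprime m n := Int.isCoprime_iff_gcd_eq_one.mpr hgcd
  have hoddmn : (m + n) % 2 = 1 := by omega
  have hmn : 0 < m * n := by nlinarith
  obtain ⟨m', n', hm', hn', hco', hodd', hsq, hprod⟩ :
      ∃ m' n' : ℤ, 0 < m' ∧ 0 < n' ∧ IsCoprime m' n' ∧ (m' + n') % 2 = 1 ∧
        m' ^ 2 - n' ^ 2 = m ^ 2 - n ^ 2 ∧ m' * n' = m * n := by
    rcases lt_or_ge 0 m with h | h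
    · have hn : 0 < n := by nlinarith
      exact ⟨m, n, h, hn, hco, hoddmn, rfl, rfl⟩
    · have hm0 : m ≠ 0 := by rintro rfl; simp at hmn
      have hmneg : m < 0 := by omega
      have hnneg : n < 0 := by nlinarith
      exact ⟨-m, -n, by omega, by omega, hco.neg_left.neg_right, by omega, by ring, by ring⟩
  have hn'm' : n' < m' := by nlinarith
  have hr2 : m' * n' * ((m' - n') * (m' + n')) = r ^ 2 := by
    apply mul_left_cancel₀ (by norm_num : (2:ℤ) ≠ 0)
    linear_combination har + (2*(m'*n')) * hsq + (2*(m^2-n^2)) * hprod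
  obtain ⟨A, B, C, R, hA, hB, hpy, harea, hABn⟩ :=
    descent_step m' n' r hm' hn' hn'm' hco' hodd' hr2
  have hABpos : 0 < A * B := mul_pos hA hB
  have e : (m ^ 2 - n ^ 2) * (2 * m * n) = (m' ^ 2 - n' ^ 2) * (2 * (m' * n')) := by
    linear_combination (-(2*m*n)) * hsq + (-(2*(m'^2 - n'^2))) * hprod
  have hlt : A * B < (m ^ 2 - n ^ 2) * (2 * m * n) := by
    rw [e]
    have h1 : 1 ≤ m' - n' := by omega
    have h2 : 1 ≤ m' + n' := by omega
    have h3 : n' ≤ m' * n' := by nlinarith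
    have h4 : 1 ≤ (m' - n') * (m' + n') := by nlinarith
    nlinarith [hABn, hn', mul_pos (mul_pos hm' hn') (mul_pos (by omega : (0:ℤ) < m' - n') (by omega : (0:ℤ) < m' + n'))]
  exact ⟨A, B, C, R, hA, hB, hpy, harea, natAbs_lt hABpos hlt⟩

private lemma no_int_triangle : ∀ k : ℕ, ∀ a b c r : ℤ, (a * b).natAbs = k →
    0 < a → 0 < b → a ^ 2 + b ^ 2 = c ^ 2 → a * b = 2 * r ^ 2 → False := by
  intro k
  induction k using Nat.strong_induction_on with
  | _ k ih =>
  intro a b c r hk ha hb hpy har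
  by_cases hco : IsCoprime a b
  · -- coprime case: use the classification of Pythagorean triples
    have hgcd : Int.gcd a b = 1 := Int.isCoprime_iff_gcd_eq_one.mp hco
    have hpt : PythagoreanTriple a b c := by
      show a * a + b * b = c * c
      linear_combination hpy
    obtain ⟨m, n, horient, -, hmn, hpar⟩ :=
      (PythagoreanTriple.coprime_classification).mp ⟨hpt, hgcd⟩
    rcases horient with ⟨ham, hbm⟩ | ⟨ham, hbm⟩
    · subst ham; subst hbm
      obtain ⟨A, B, C, R, hA, hB, hpy', harea', hmeas⟩ :=
        coprime_step m n r hmn hpar ha hb har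
      exact ih _ (by omega) A B C R rfl hA hB hpy' harea'
    · subst ham; subst hbm
      obtain ⟨A, B, C, R, hA, hB, hpy', harea', hmeas⟩ :=
        coprime_step m n r hmn hpar hb ha (by linear_combination har)
      rw [show (m ^ 2 - n ^ 2) * (2 * m * n) = 2 * m * n * (m ^ 2 - n ^ 2) by ring] at hmeas
      exact ih _ (by omega) A B C R rfl hA hB hpy' harea'
  · -- non-coprime: divide out a common prime
    have hg1 : Int.gcd a b ≠ 1 := fun h => hco (Int.isCoprime_iff_gcd_eq_one.mpr h)
    obtain ⟨p, hp, hpdvd⟩ := Nat.exists_prime_and_dvd hg1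
    have hpz : Prime (p : ℤ) := Nat.prime_iff_prime_int.mp hp
    have hp0 : (0:ℤ) < p := by exact_mod_cast hp.pos
    have hp2' : (2:ℤ) ≤ p := by exact_mod_cast hp.two_le
    have pa : (p:ℤ) ∣ a := (Int.natCast_dvd_natCast.mpr hpdvd).trans (Int.gcd_dvd_left a b)
    have pb : (p:ℤ) ∣ b := (Int.natCast_dvd_natCast.mpr hpdvd).trans (Int.gcd_dvd_right a b)
    have pc : (p:ℤ) ∣ c := by
      apply hpz.dvd_of_dvd_pow (n := 2)
      rw [← hpy]
      exact dvd_add (dvd_pow pa two_ne_zero) (dvd_pow pb two_ne_zero)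
    have pr : (p:ℤ) ∣ r := by
      have hab2 : (p:ℤ) * p ∣ 2 * r ^ 2 := by rw [← har]; exact mul_dvd_mul pa pb
      by_cases hp2 : p = 2
      · subst hp2
        obtain ⟨k, hk⟩ := hab2
        have h2r : (2:ℤ) ∣ r ^ 2 := ⟨k, by push_cast at hk; linarith⟩
        exact Int.prime_two.dvd_of_dvd_pow h2r
      · have hpr2 : (p:ℤ) ∣ 2 * r ^ 2 := (dvd_mul_right (p:ℤ) (p:ℤ)).trans hab2
        rcases hpz.dvd_mul.mp hpr2 with h2 | hr2
        · exfalso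
          have hpd2 : p ∣ 2 := by exact_mod_cast h2
          exact hp2 ((Nat.prime_dvd_prime_iff_eq hp Nat.prime_two).mp hpd2)
        · exact hpz.dvd_of_dvd_pow hr2
    obtain ⟨a₁, rfl⟩ := pa
    obtain ⟨b₁, rfl⟩ := pb
    obtain ⟨c₁, rfl⟩ := pc
    obtain ⟨r₁, rfl⟩ := pr
    have hpne : ((p:ℤ)) ^ 2 ≠ 0 := pow_ne_zero 2 (by positivity)
    have ha₁ : 0 < a₁ := by nlinarith
    have hb₁ : 0 < b₁ := by nlinarith
    have hpy₁ : a₁ ^ 2 + b₁ ^ 2 = c₁ ^ 2 :=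
      mul_left_cancel₀ hpne (by linear_combination hpy)
    have har₁ : a₁ * b₁ = 2 * r₁ ^ 2 :=
      mul_left_cancel₀ hpne (by linear_combination har)
    have hmeas : (a₁ * b₁).natAbs < k := by
      have hlt : a₁ * b₁ < (p:ℤ) * a₁ * ((p:ℤ) * b₁) := by
        nlinarith [mul_pos ha₁ hb₁,
          mul_le_mul hp2' hp2' (by norm_num : (0:ℤ) ≤ 2) (by positivity : (0:ℤ) ≤ (p:ℤ))]
      have := natAbs_lt (mul_pos ha₁ hb₁) hlt
      omega
    exact ih _ hmeas a₁ b₁ c₁ r₁ rfl ha₁ hb₁ hpy₁ har₁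

private lemma qden_mul (q : ℚ) : (q.num : ℚ) = q * (q.den : ℚ) := by
  have h := Rat.num_div_den q
  have hden : ((q.den : ℚ)) ≠ 0 := by
    exact_mod_cast q.den_ne_zero
  exact (div_eq_iff hden).mp h

/-- Theorem 3 (Fermat): no right triangle with positive rational sides has area the square
of a rational; in particular, `1` is not a congruent number. -/
theorem no_rational_right_triangle_with_square_area :
    (¬ ∃ a b c r : ℚ, 0 < a ∧ 0 < b ∧ 0 < c ∧ a ^ 2 + b ^ 2 = c ^ 2 ∧
        a * b / 2 = r ^ 2) ∧
    (¬ ∃ a b c : ℚ, 0 < a ∧ 0 < b ∧ 0 < c ∧ a ^ 2 + b ^ 2 = c ^ 2 ∧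
        a * b = 2 * 1) := by
  have main : ¬ ∃ a b c r : ℚ, 0 < a ∧ 0 < b ∧ 0 < c ∧ a ^ 2 + b ^ 2 = c ^ 2 ∧
      a * b / 2 = r ^ 2 := by
    rintro ⟨a, b, c, r, ha, hb, hc, hpy, harea⟩
    set D : ℤ := (a.den : ℤ) * b.den * c.den * r.den with hD
    have hDq : (0:ℚ) < (D : ℚ) := by
      have := a.den_pos; have := b.den_pos; have := c.den_pos; have := r.den_pos
      positivity
    set A : ℤ := a.num * ((b.den : ℤ) * c.den * r.den) with hA
    set B : ℤ := b.num * ((a.den : ℤ) * c.den * r.den) with hB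
    set C : ℤ := c.num * ((a.den : ℤ) * b.den * r.den) with hC
    set R : ℤ := r.num * ((a.den : ℤ) * b.den * c.den) with hR
    have hAq : (A : ℚ) = (D : ℚ) * a := by
      rw [hA, hD]; push_cast; rw [qden_mul a]; ring
    have hBq : (B : ℚ) = (D : ℚ) * b := by
      rw [hB, hD]; push_cast; rw [qden_mul b]; ring
    have hCq : (C : ℚ) = (D : ℚ) * c := by
      rw [hC, hD]; push_cast; rw [qden_mul c]; ring
    have hRq : (R : ℚ) = (D : ℚ) * r := by
      rw [hR, hD]; push_cast; rw [qden_mul r]; ring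
    have hApos : 0 < A := by
      have : (0:ℚ) < (A:ℚ) := by rw [hAq]; exact mul_pos hDq ha
      exact_mod_cast this
    have hBpos : 0 < B := by
      have : (0:ℚ) < (B:ℚ) := by rw [hBq]; exact mul_pos hDq hb
      exact_mod_cast this
    have hPY : A ^ 2 + B ^ 2 = C ^ 2 := by
      have : (A:ℚ) ^ 2 + (B:ℚ) ^ 2 = (C:ℚ) ^ 2 := by
        rw [hAq, hBq, hCq]; linear_combination ((D:ℚ))^2 * hpy
      exact_mod_cast this
    have hAR : A * B = 2 * R ^ 2 := by
      have : (A:ℚ) * (B:ℚ) = 2 * (R:ℚ) ^ 2 := by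
        rw [hAq, hBq, hRq]; linear_combination (2*((D:ℚ))^2) * harea
      exact_mod_cast this
    exact no_int_triangle (A * B).natAbs A B C R rfl hApos hBpos hPY hAR
  refine ⟨main, ?_⟩
  rintro ⟨a, b, c, ha, hb, hc, hpy, hab⟩
  exact main ⟨a, b, c, 1, ha, hb, hc, hpy, by rw [hab]; norm_num⟩
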